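/- Termination completeness of Sieve: let G be a finite directed graph with edge labels Dec, Inc : E → Finset Var. If every cycle of G contains an edge decrementing a variable X such that no edge of that cycle increments X, then the Sieve procedure, run to completion, reduces G to an acyclic graph. -/

import Mathlib

/-- One-step reachability along the edges of the subgraph `H`. -/
def sieveReach {V ι : Type*} (src tgt : ι → V) (H : Finset ι) : V → V → Prop :=
  Relation.ReflTransGen (fun a b => ∃ e ∈ H, src e = a ∧ tgt e = b)

/-- Edge `e` lies inside a strongly connected component of the subgraph `H`:
it belongs to `H` and its endpoints are mutually reachable in `H`. -/
def sieveInside {V ι : Type*} (src tgt : ι → V) (H : Finset ι) (e : ι) : Prop :=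
  e ∈ H ∧ sieveReach src tgt H (tgt e) (src e)

/-- Edges `e` and `e'` lie inside the same strongly connected component of `H`. -/
def sieveSameC {V ι : Type*} (src tgt : ι → V) (H : Finset ι) (e e' : ι) : Prop :=
  sieveInside src tgt H e ∧ sieveInside src tgt H e' ∧
    sieveReach src tgt H (src e) (src e') ∧ sieveReach src tgt H (src e') (src e)

/-- One iteration of the Sieve procedure: pick an SCC `C` (the component of an edge `e₀`)
and a variable `X` decremented by some edge inside `C` and incremented by no edge inside
`C`; remove all edges inside `C` that decrement `X`. -/
def sieveStep {V ι Var : Type*} (src tgt : ι → V) (Dec Inc : ι → Finset Var)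
    (H H' : Finset ι) : Prop :=
  ∃ (X : Var) (e₀ : ι), sieveInside src tgt H e₀ ∧ X ∈ Dec e₀ ∧
    (∀ e, sieveSameC src tgt H e₀ e → X ∉ Inc e) ∧
    (∀ e, e ∈ H' ↔ e ∈ H ∧ ¬ (sieveSameC src tgt H e₀ e ∧ X ∈ Dec e))

section aux
variable {V ι : Type*} (src tgt : ι → V)

def IsWalk : V → V → List ι → Prop
  | a, b, [] => a = b
  | a, b, e :: l => src e = a ∧ IsWalk (tgt e) b l

variable {src tgt}

lemma isWalk_append {a b c : V} {l l' : List ι} (h : IsWalk src tgt a b l)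
    (h' : IsWalk src tgt b c l') : IsWalk src tgt a c (l ++ l') := by
  induction l generalizing a with
  | nil => rw [List.nil_append]; cases h; exact h'
  | cons e l ih => exact ⟨h.1, ih h.2⟩

lemma exists_walk_of_reach {H : Finset ι} {a b : V} (h : sieveReach src tgt H a b) :
    ∃ l : List ι, (∀ e ∈ l, e ∈ H) ∧ IsWalk src tgt a b l := by
  induction h using Relation.ReflTransGen.head_induction_on with
  | refl => exact ⟨[], by simp, rfl⟩
  | head hab _ ih =>
    obtain ⟨e, heH, hsrc, htgt⟩ := hab
    obtain ⟨l, hl, hw⟩ := ih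
    exact ⟨e :: l, by intro f hf; rcases List.mem_cons.mp hf with rfl | hf; exact heH; exact hl f hf,
      hsrc, htgt ▸ hw⟩

lemma reach_of_walk {H : Finset ι} {a b : V} {l : List ι} (hH : ∀ e ∈ l, e ∈ H)
    (hw : IsWalk src tgt a b l) : sieveReach src tgt H a b := by
  induction l generalizing a with
  | nil => exact hw ▸ Relation.ReflTransGen.refl
  | cons e l ih =>
    exact Relation.ReflTransGen.head ⟨e, hH e (by simp), hw.1, rfl⟩
      (ih (fun f hf => hH f (by simp [hf])) hw.2)

lemma walk_mem {H : Finset ι} {a b : V} {l : List ι} (hH : ∀ e ∈ l, e ∈ H)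
    (hw : IsWalk src tgt a b l) :
    ∀ e ∈ l, sieveReach src tgt H a (src e) ∧ sieveReach src tgt H (tgt e) b := by
  induction l generalizing a with
  | nil => simp
  | cons f l ih =>
    intro e he
    rcases List.mem_cons.mp he with rfl | he'
    · exact ⟨hw.1 ▸ Relation.ReflTransGen.refl,
        reach_of_walk (fun g hg => hH g (by simp [hg])) hw.2⟩
    · obtain ⟨h1, h2⟩ := ih (fun g hg => hH g (by simp [hg])) hw.2 e he'
      exact ⟨Relation.ReflTransGen.head ⟨f, hH f (by simp), hw.1, rfl⟩ h1, h2⟩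

lemma walk_head {a b : V} {l : List ι} (hw : IsWalk src tgt a b l) (h : 0 < l.length) :
    src (l.get ⟨0, h⟩) = a := by
  cases l with
  | nil => simp at h
  | cons e l => exact hw.1

lemma walk_last {a b : V} {l : List ι} (hw : IsWalk src tgt a b l) (h : 0 < l.length) :
    tgt (l.get ⟨l.length - 1, by omega⟩) = b := by
  induction l generalizing a with
  | nil => simp at h
  | cons e l ih =>
    cases l with
    | nil => exact hw.2
    | cons f l' =>
      have := ih hw.2 (by simp)
      simpa using this

lemma walk_chain {a b : V} {l : List ι} (hw : IsWalk src tgt a b l) :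
    ∀ i (h : i + 1 < l.length), tgt (l.get ⟨i, by omega⟩) = src (l.get ⟨i + 1, h⟩) := by
  induction l generalizing a with
  | nil => intro i h; simp at h
  | cons e l ih =>
    intro i h
    cases i with
    | zero =>
      have hl : 0 < l.length := by simpa using h
      simpa using (walk_head hw.2 hl).symm
    | succ j => exact ih hw.2 j (by simpa using h)

lemma exists_bigwalk {Hs : Finset ι} {e₀ : ι} :
    ∀ L : List ι, (∀ f ∈ L, sieveSameC src tgt Hs e₀ f) →
      ∃ W : List ι, (∀ e ∈ W, e ∈ Hs) ∧ IsWalk src tgt (src e₀) (src e₀) W ∧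
        ∀ f ∈ L, f ∈ W := by
  intro L
  induction L with
  | nil => exact fun _ => ⟨[], by simp, rfl, by simp⟩
  | cons f L ih =>
    intro hL
    obtain ⟨W', hW'H, hW'w, hW'm⟩ := ih (fun g hg => hL g (by simp [hg]))
    obtain ⟨_, hfin, h1, h2⟩ := hL f (by simp)
    obtain ⟨l₁, hl₁H, hl₁⟩ := exists_walk_of_reach h1
    obtain ⟨l₂, hl₂H, hl₂⟩ := exists_walk_of_reach hfin.2
    obtain ⟨l₃, hl₃H, hl₃⟩ := exists_walk_of_reach h2
    refine ⟨l₁ ++ (f :: (l₂ ++ (l₃ ++ W'))), ?_, ?_, ?_⟩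
    · intro e he
      simp only [List.mem_append, List.mem_cons] at he
      rcases he with h | rfl | h | h | h
      exacts [hl₁H e h, hfin.1, hl₂H e h, hl₃H e h, hW'H e h]
    · exact isWalk_append hl₁ ⟨rfl, isWalk_append hl₂ (isWalk_append hl₃ hW'w)⟩
    · intro g hg
      rcases List.mem_cons.mp hg with rfl | hg
      · simp
      · simp [hW'm g hg]

end aux

lemma sameC_trans {V ι : Type*} {src tgt : ι → V} {H : Finset ι} {a b c : ι}
    (h1 : sieveSameC src tgt H a b) (h2 : sieveSameC src tgt H b c) :
    sieveSameC src tgt H a c :=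
  ⟨h1.1, h2.2.1, h1.2.2.1.trans h2.2.2.1, h2.2.2.2.trans h1.2.2.2⟩


/-- Termination completeness of Sieve. If every cycle of the graph
contains an edge decrementing a variable `X` such that no edge of the cycle increments
`X`, then when Sieve (run from the full edge set) stops, the remaining graph is
acyclic. -/
theorem stmt8 {V ι Var : Type*} [Fintype V] [Fintype ι] [Fintype Var]
    (src tgt : ι → V) (Dec Inc : ι → Finset Var)
    (hgood : ∀ (k : ℕ), 0 < k → ∀ c : ℕ → ι, (∀ i, c (i + k) = c i) →
      (∀ i, tgt (c i) = src (c (i + 1))) →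
      ∃ X : Var, (∃ i, X ∈ Dec (c i)) ∧ ∀ j, X ∉ Inc (c j))
    (n : ℕ) (H : ℕ → Finset ι) (h0 : H 0 = Finset.univ)
    (hstep : ∀ i < n, sieveStep src tgt Dec Inc (H i) (H (i + 1)))
    (hstuck : ∀ H' : Finset ι, ¬ sieveStep src tgt Dec Inc (H n) H') :
    ∀ e : ι, ¬ sieveInside src tgt (H n) e := by
  simp only [sieveStep] at hstuck
  classical
  intro e₀ hin
  set Hs := H n with hHs
  have hself : sieveSameC src tgt Hs e₀ e₀ :=
    ⟨hin, hin, Relation.ReflTransGen.refl, Relation.ReflTransGen.refl⟩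
  set L := (Finset.univ.filter (fun f => sieveSameC src tgt Hs e₀ f)).toList with hLdef
  have hLmem : ∀ f, f ∈ L ↔ sieveSameC src tgt Hs e₀ f := by
    intro f; simp [hLdef]
  obtain ⟨W, hWH, hWw, hWcov⟩ := exists_bigwalk L (fun f hf => (hLmem f).1 hf)
  have he₀W : e₀ ∈ W := hWcov e₀ ((hLmem e₀).2 hself)
  have hk : 0 < W.length := List.length_pos_iff.2 (by rintro rfl; simp at he₀W)
  set c : ℕ → ι := fun i => W.get ⟨i % W.length, Nat.mod_lt _ hk⟩ with hc
  have hWsame : ∀ e ∈ W, sieveSameC src tgt Hs e₀ e := by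
    intro e he
    obtain ⟨r1, r2⟩ := walk_mem hWH hWw e he
    have heH : e ∈ Hs := hWH e he
    exact ⟨hin, ⟨heH, r2.trans r1⟩, r1,
      (Relation.ReflTransGen.single ⟨e, heH, rfl, rfl⟩).trans r2⟩
  have hper : ∀ i, c (i + W.length) = c i := by
    intro i; simp only [hc, Nat.add_mod_right]
  have hadj : ∀ i, tgt (c i) = src (c (i + 1)) := by
    intro i
    by_cases h : i % W.length + 1 < W.length
    · have h1 : (i + 1) % W.length = i % W.length + 1 := by
        conv_lhs => rw [Nat.add_mod]
        rw [Nat.mod_eq_of_lt (show 1 < W.length by omega), Nat.mod_eq_of_lt h]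
      have := walk_chain hWw (i % W.length) h
      simp only [hc, h1]
      exact this
    · have hm : i % W.length = W.length - 1 := by
        have := Nat.mod_lt i hk; omega
      have h1 : (i + 1) % W.length = 0 := by
        conv_lhs => rw [Nat.add_mod]
        rcases Nat.eq_or_lt_of_le hk with h2 | h2
        · rw [← h2]; simp; omega
        · rw [Nat.mod_eq_of_lt h2, hm]
          have : W.length - 1 + 1 = W.length := by omega
          rw [this, Nat.mod_self]
      simp only [hc, h1, hm]
      rw [walk_last hWw hk, walk_head hWw hk]
  obtain ⟨X, ⟨i, hXd⟩, hXi⟩ := hgood W.length hk c hper hadj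
  have he₁W : c i ∈ W := List.get_mem _ _
  have he₁same : sieveSameC src tgt Hs e₀ (c i) := hWsame _ he₁W
  apply hstuck (Hs.filter (fun e => ¬ (sieveSameC src tgt Hs (c i) e ∧ X ∈ Dec e)))
  refine ⟨X, c i, he₁same.2.1, hXd, ?_, ?_⟩
  · intro e hee
    have hsame : sieveSameC src tgt Hs e₀ e := sameC_trans he₁same hee
    have heW : e ∈ W := hWcov e ((hLmem e).2 hsame)
    obtain ⟨⟨j, hj⟩, rfl⟩ := List.mem_iff_get.mp heW
    have : c j = W.get ⟨j, hj⟩ := by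
      simp only [hc]; congr 1; exact Fin.ext (Nat.mod_eq_of_lt hj)
    rw [← this]; exact hXi j
  · intro e; simp [Finset.mem_filter]
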